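/- Let L be a Lie algebra over a field such that the abelianization L/L² is finite-dimensional, and let h: L × L → L⊗L be a universal Lie pairing. Then the tensor center Z⊗(L) = {l ∈ L : l⊗l' = 0 for all l' ∈ L} is contained in the derived subalgebra L². -/

import Mathlib

universe u v w x

/-- A Lie pairing `ρ : L × L → H` of Lie algebras over a field `F`:
a bilinear map satisfying the three Lie-pairing relations. -/
structure IsLiePairing (F : Type u) [Field F] {L : Type v} {H : Type w}
    [LieRing L] [LieAlgebra F L] [LieRing H] [LieAlgebra F H]
    (ρ : L → L → H) : Prop where
  add_left : ∀ l l' k : L, ρ (l + l') k = ρ l k + ρ l' k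
  add_right : ∀ l k k' : L, ρ l (k + k') = ρ l k + ρ l k'
  smul_left : ∀ (c : F) (l k : L), ρ (c • l) k = c • ρ l k
  smul_right : ∀ (c : F) (l k : L), ρ l (c • k) = c • ρ l k
  bracket_left : ∀ l l' s : L, ρ ⁅l, l'⁆ s = ρ l ⁅l', s⁆ - ρ l' ⁅l, s⁆
  bracket_right : ∀ l s s' : L, ρ l ⁅s, s'⁆ = ρ ⁅s', l⁆ s - ρ ⁅s, l⁆ s'
  bracket_bracket : ∀ l s l' s' : L, ρ ⁅l, s⁆ ⁅l', s'⁆ = -⁅ρ s l, ρ l' s'⁆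

/-- `h : L × L → T` is a universal Lie pairing: `T` plays the role of the
nonabelian tensor square `L ⊗ L`, with `h l l' = l ⊗ l'`. -/
structure IsUniversalLiePairing (F : Type u) [Field F] (L : Type v) (T : Type w)
    [LieRing L] [LieAlgebra F L] [LieRing T] [LieAlgebra F T]
    (h : L → L → T) : Prop where
  isLiePairing : IsLiePairing F h
  universal : ∀ (Q : Type (max u v w)) [LieRing Q] [LieAlgebra F Q]
      (h' : L → L → Q), IsLiePairing F h' →
        ∃! ζ : T →ₗ⁅F⁆ Q, ∀ x y : L, ζ (h x y) = h' x y

/-- If `L/L²` is finite-dimensional then the tensor center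
`Z⊗(L) = {l : l⊗l' = 0 for all l'}` is contained in the derived
subalgebra `L²`. -/
theorem tensorCenter_le_derived (F : Type u) [Field F] (L : Type v) (T : Type w)
    [LieRing L] [LieAlgebra F L] [LieRing T] [LieAlgebra F T]
    (h : L → L → T) (hh : IsUniversalLiePairing F L T h)
    [FiniteDimensional F (L ⧸ ⁅(⊤ : LieIdeal F L), (⊤ : LieIdeal F L)⁆)] :
    ∀ l : L, (∀ l' : L, h l l' = 0) →
      l ∈ ⁅(⊤ : LieIdeal F L), (⊤ : LieIdeal F L)⁆ := by
  intro l hl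
  by_contra hlI
  set I : LieIdeal F L := ⁅(⊤ : LieIdeal F L), (⊤ : LieIdeal F L)⁆ with hI
  let π : L →ₗ⁅F,L⁆ L ⧸ I := LieSubmodule.Quotient.mk' I
  have hπl : π l ≠ 0 := fun hzero => hlI (LieSubmodule.Quotient.mk_eq_zero I |>.mp hzero)
  obtain ⟨f, hf⟩ : ∃ f : Module.Dual F (L ⧸ I), f (π l) ≠ 0 := by
    by_contra hc
    push_neg at hc
    exact hπl ((Module.forall_dual_apply_eq_zero_iff F (π l)).mp hc)
  have hbr : ∀ x y : L, π ⁅x, y⁆ = 0 := by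
    intro x y
    rw [show π ⁅x, y⁆ = LieSubmodule.Quotient.mk' I ⁅x, y⁆ from rfl,
      LieSubmodule.Quotient.mk_eq_zero]
    exact LieSubmodule.lie_mem_lie (LieSubmodule.mem_top x) (LieSubmodule.mem_top y)
  let Q := ULift.{max u v w} F
  letI : LieRing Q := LieRing.ofAssociativeRing
  letI : LieAlgebra F Q := LieAlgebra.ofAssociativeAlgebra
  have habQ : ∀ a b : Q, ⁅a, b⁆ = 0 := by
    intro a b
    show a * b - b * a = 0
    rw [mul_comm, sub_self]
  let ρ : L → L → Q := fun x y => ULift.up (f (π x) * f (π y))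
  have hρ : IsLiePairing F ρ := by
    constructor
    · intro a b k
      apply ULift.ext
      show f (π (a + b)) * f (π k) = f (π a) * f (π k) + f (π b) * f (π k)
      rw [map_add π, map_add, add_mul]
    · intro a b k
      apply ULift.ext
      show f (π a) * f (π (b + k)) = f (π a) * f (π b) + f (π a) * f (π k)
      rw [map_add π, map_add, mul_add]
    · intro c a k
      apply ULift.ext
      show f (π (c • a)) * f (π k) = ((c • ULift.up (f (π a) * f (π k)) : Q)).down
      rw [ULift.smul_down, map_smul π, map_smul, smul_eq_mul, smul_eq_mul, mul_assoc]
    · intro c a k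
      apply ULift.ext
      show f (π a) * f (π (c • k)) = ((c • ULift.up (f (π a) * f (π k)) : Q)).down
      rw [ULift.smul_down, map_smul π, map_smul, smul_eq_mul, smul_eq_mul]
      ring
    · intro a b s
      apply ULift.ext
      show f (π ⁅a, b⁆) * f (π s)
        = ((ULift.up (f (π a) * f (π ⁅b, s⁆)) - ULift.up (f (π b) * f (π ⁅a, s⁆)) : Q)).down
      simp [hbr]
    · intro a s s'
      apply ULift.ext
      show f (π a) * f (π ⁅s, s'⁆)
        = ((ULift.up (f (π ⁅s', a⁆) * f (π s)) - ULift.up (f (π ⁅s, a⁆) * f (π s')) : Q)).down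
      simp [hbr]
    · intro a s b s'
      apply ULift.ext
      show f (π ⁅a, s⁆) * f (π ⁅b, s'⁆)
        = (-⁅ULift.up (f (π s) * f (π a)), ULift.up (f (π b) * f (π s'))⁆ : Q).down
      rw [habQ, neg_zero, hbr, map_zero, zero_mul]
      rfl
  obtain ⟨ζ, hζ, -⟩ := hh.universal Q ρ hρ
  have hz : ρ l l = 0 := by rw [← hζ l l, hl l, map_zero ζ]
  have : f (π l) * f (π l) = 0 := congrArg ULift.down hz
  rcases mul_eq_zero.mp this with h0 | h0 <;> exact hf h0
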